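/- Let α ∈ (1/3, 2/3) and λ = (3/2)α(α−1). The function ψ(x) = e^{(1−α)x/√2}/(e^{x/√2}+1) · (1 − (1/(1−α))·e^{x/√2}/(e^{x/√2}+1)) is a nonzero solution of ψ'' + √2(1/2 − α)ψ' + (−3φ(x)² + 2(α+1)φ(x) − α)ψ = λψ with φ(x) = 1/(e^{x/√2}+1), and satisfies lim_{x→±∞} ψ(x) = 0. -/

import Mathlib

open Real Filter

noncomputable def myP (α u : ℝ) : ℝ :=
  ((1-α)*((1-(1-α)⁻¹)*u+1) + (1-(1-α)⁻¹)*u)*(u+1) - 2*((1-(1-α)⁻¹)*u+1)*u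

noncomputable def myPd (α u : ℝ) : ℝ :=
  2*(-α*(1-(1-α)⁻¹))*u + ((1-α)+(1-(1-α)⁻¹)*(2-α)-2)

noncomputable def myQ (α u : ℝ) : ℝ :=
  ((1-α)*myP α u + u*myPd α u)*(u+1) - 3*(myP α u)*u

noncomputable def myg0 (α t : ℝ) : ℝ :=
  exp ((1-α)*t)/(exp t+1) * (1 - (1/(1-α)) * (exp t/(exp t+1)))

noncomputable def myg1 (α t : ℝ) : ℝ := exp ((1-α)*t) * myP α (exp t) / (exp t + 1)^3

noncomputable def myg2 (α t : ℝ) : ℝ := exp ((1-α)*t) * myQ α (exp t) / (exp t + 1)^4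

lemma my_hd0 (α : ℝ) (hα : 1 - α ≠ 0) (t : ℝ) : HasDerivAt (myg0 α) (myg1 α t) t := by
  have he : Real.exp t + 1 ≠ 0 := by positivity
  have h1 : HasDerivAt (fun t : ℝ => exp ((1-α)*t)) ((1-α) * exp ((1-α)*t)) t := by
    simpa [mul_comm] using ((hasDerivAt_id t).const_mul (1-α)).exp
  have h2 : HasDerivAt Real.exp (exp t) t := Real.hasDerivAt_exp t
  have h3 := (h1.div (h2.add_const 1) he).mul
    (((h2.div (h2.add_const 1) he).const_mul (1/(1-α))).const_sub 1)
  exact h3.congr_deriv (by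
    unfold myg1 myP
    simp only [Pi.div_apply, Pi.mul_apply, Pi.pow_apply]
    field_simp
    ring)

lemma my_hd1 (α : ℝ) (hα : 1 - α ≠ 0) (t : ℝ) : HasDerivAt (myg1 α) (myg2 α t) t := by
  have he : Real.exp t + 1 ≠ 0 := by positivity
  have h1 : HasDerivAt (fun t : ℝ => exp ((1-α)*t)) ((1-α) * exp ((1-α)*t)) t := by
    simpa [mul_comm] using ((hasDerivAt_id t).const_mul (1-α)).exp
  have h2 : HasDerivAt Real.exp (exp t) t := Real.hasDerivAt_exp t
  have hP : HasDerivAt (myP α) (myPd α (exp t)) (exp t) := by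
    have heq : myP α = fun u : ℝ => (-α*(1-(1-α)⁻¹))*u^2
        + ((1-α)+(1-(1-α)⁻¹)*(2-α)-2)*u + (1-α) := by
      funext u; unfold myP; ring
    rw [heq]
    have h := (((hasDerivAt_pow 2 (exp t)).const_mul (-α*(1-(1-α)⁻¹))).add
      ((hasDerivAt_id (exp t)).const_mul ((1-α)+(1-(1-α)⁻¹)*(2-α)-2))).add_const (1-α)
    exact h.congr_deriv (by
      unfold myPd
      push_cast
      ring)
  have hPe : HasDerivAt (fun t : ℝ => myP α (exp t)) (myPd α (exp t) * exp t) t :=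
    hP.comp t h2
  have h3 := ((h1.mul hPe).div ((h2.add_const 1).pow 3)
    (pow_ne_zero 3 he))
  exact h3.congr_deriv (by
    unfold myg2 myQ
    simp only [Pi.div_apply, Pi.mul_apply, Pi.pow_apply]
    push_cast
    field_simp)

lemma my_ode (α : ℝ) (hα : 1 - α ≠ 0) (t : ℝ) :
    (1/2) * myg2 α t + (1/2 - α) * myg1 α t
      + (-3 * (1/(exp t+1))^2 + 2*(α+1)*(1/(exp t+1)) - α) * myg0 α t
      = ((3/2) * α * (α - 1)) * myg0 α t := by
  have he : Real.exp t + 1 ≠ 0 := by positivity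
  unfold myg0 myg1 myg2 myQ myP myPd
  field_simp
  ring

lemma my_bot (α : ℝ) (h : 0 < 1 - α) : Tendsto (myg0 α) atBot (nhds 0) := by
  have h2 : Tendsto Real.exp atBot (nhds 0) := Real.tendsto_exp_atBot
  have hden : Tendsto (fun t : ℝ => exp t + 1) atBot (nhds 1) := by
    simpa using h2.add_const 1
  have h1 : Tendsto (fun t : ℝ => exp ((1-α)*t)) atBot (nhds 0) :=
    h2.comp (Tendsto.const_mul_atBot h tendsto_id)
  have := (h1.div hden one_ne_zero).mul
    (((h2.div hden one_ne_zero).const_mul (1/(1-α))).const_sub 1)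
  unfold myg0
  simpa using this

lemma my_top (α : ℝ) (hα : 0 < α) : Tendsto (myg0 α) atTop (nhds 0) := by
  have he : ∀ t : ℝ, Real.exp t + 1 ≠ 0 := fun t => by positivity
  have key : ∀ t : ℝ, myg0 α t
      = exp (-α*t) * (exp t/(exp t+1)) * (1 - (1/(1-α)) * (exp t/(exp t+1))) := by
    intro t
    unfold myg0
    rw [show (1-α)*t = -α*t + t by ring, Real.exp_add]
    ring
  have h1 : Tendsto (fun t : ℝ => exp (-α*t)) atTop (nhds 0) :=
    Real.tendsto_exp_atBot.comp (Tendsto.const_mul_atTop_of_neg (by linarith) tendsto_id)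
  have hden : Tendsto (fun t : ℝ => exp t + 1) atTop atTop :=
    tendsto_atTop_add_const_right _ 1 Real.tendsto_exp_atTop
  have hinv : Tendsto (fun t : ℝ => (exp t + 1)⁻¹) atTop (nhds 0) :=
    hden.inv_tendsto_atTop
  have hq : Tendsto (fun t : ℝ => exp t/(exp t+1)) atTop (nhds 1) := by
    have := Tendsto.const_sub (1:ℝ) hinv
    rw [sub_zero] at this
    refine this.congr (fun t => ?_)
    field_simp
    ring
  have := (h1.mul hq).mul ((hq.const_mul (1/(1-α))).const_sub 1)
  rw [show (0:ℝ)*1*(1-1/(1-α)*1) = 0 by ring] at this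
  exact this.congr (fun t => (key t).symm)

theorem stmt_10 (α : ℝ) (hα : α ∈ Set.Ioo (1/3 : ℝ) (2/3))
    (lam : ℝ) (hlam : lam = (3/2) * α * (α - 1)) :
    (fun x : ℝ => exp ((1 - α) * x / Real.sqrt 2) / (exp (x / Real.sqrt 2) + 1) *
        (1 - (1 / (1 - α)) * (exp (x / Real.sqrt 2) / (exp (x / Real.sqrt 2) + 1)))) ≠ 0 ∧
    (∀ x : ℝ,
      deriv (deriv (fun x : ℝ =>
          exp ((1 - α) * x / Real.sqrt 2) / (exp (x / Real.sqrt 2) + 1) *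
            (1 - (1 / (1 - α)) * (exp (x / Real.sqrt 2) / (exp (x / Real.sqrt 2) + 1))))) x
        + Real.sqrt 2 * (1/2 - α) *
          deriv (fun x : ℝ =>
            exp ((1 - α) * x / Real.sqrt 2) / (exp (x / Real.sqrt 2) + 1) *
              (1 - (1 / (1 - α)) * (exp (x / Real.sqrt 2) / (exp (x / Real.sqrt 2) + 1)))) x
        + (-3 * (1 / (exp (x / Real.sqrt 2) + 1))^2
            + 2 * (α + 1) * (1 / (exp (x / Real.sqrt 2) + 1)) - α) *
          (exp ((1 - α) * x / Real.sqrt 2) / (exp (x / Real.sqrt 2) + 1) *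
            (1 - (1 / (1 - α)) * (exp (x / Real.sqrt 2) / (exp (x / Real.sqrt 2) + 1))))
        = lam * (exp ((1 - α) * x / Real.sqrt 2) / (exp (x / Real.sqrt 2) + 1) *
            (1 - (1 / (1 - α)) * (exp (x / Real.sqrt 2) / (exp (x / Real.sqrt 2) + 1))))) ∧
    Tendsto (fun x : ℝ => exp ((1 - α) * x / Real.sqrt 2) / (exp (x / Real.sqrt 2) + 1) *
        (1 - (1 / (1 - α)) * (exp (x / Real.sqrt 2) / (exp (x / Real.sqrt 2) + 1))))
      atBot (nhds 0) ∧
    Tendsto (fun x : ℝ => exp ((1 - α) * x / Real.sqrt 2) / (exp (x / Real.sqrt 2) + 1) *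
        (1 - (1 / (1 - α)) * (exp (x / Real.sqrt 2) / (exp (x / Real.sqrt 2) + 1))))
      atTop (nhds 0) := by
  obtain ⟨ha1, ha2⟩ := hα
  have hαpos : 0 < α := by linarith
  have h1a : 0 < 1 - α := by linarith
  have h1a' : (1:ℝ) - α ≠ 0 := ne_of_gt h1a
  have hs0 : (0:ℝ) < Real.sqrt 2 := Real.sqrt_pos.mpr (by norm_num)
  have hs : Real.sqrt 2 ≠ 0 := ne_of_gt hs0
  have hss : Real.sqrt 2 * Real.sqrt 2 = 2 := Real.mul_self_sqrt (by norm_num)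
  set s := Real.sqrt 2 with hsdef
  have hFeq : (fun x : ℝ => exp ((1 - α) * x / s) / (exp (x / s) + 1) *
      (1 - (1 / (1 - α)) * (exp (x / s) / (exp (x / s) + 1))))
      = fun x : ℝ => myg0 α (x / s) := by
    funext x
    simp only [myg0, mul_div_assoc]
  have hinner : ∀ x : ℝ, HasDerivAt (fun x : ℝ => x / s) (1/s) x := fun x => by
    simpa using (hasDerivAt_id x).div_const s
  have hF1 : ∀ x : ℝ, HasDerivAt (fun x : ℝ => myg0 α (x / s)) (myg1 α (x/s) * (1/s)) x :=
    fun x => by have := (my_hd0 α h1a' (x/s)).comp x (hinner x); exact this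
  have hderiv1 : deriv (fun x : ℝ => myg0 α (x / s)) = fun x => myg1 α (x/s) * (1/s) := by
    funext x; exact (hF1 x).deriv
  have hF2 : ∀ x : ℝ, HasDerivAt (fun x : ℝ => myg1 α (x/s) * (1/s))
      (myg2 α (x/s) * (1/s) * (1/s)) x :=
    fun x => ((my_hd1 α h1a' (x/s)).comp x (hinner x)).mul_const (1/s)
  refine ⟨?_, ?_, ?_, ?_⟩
  · -- nonzero
    intro h
    rw [hFeq] at h
    have hx := congrFun h (s * Real.log (1/2))
    simp only [Pi.zero_apply] at hx
    rw [mul_div_cancel_left₀ _ hs] at hx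
    have hb : (1:ℝ)/(1-α) < 3 := by
      rw [div_lt_iff₀ h1a]; linarith
    unfold myg0 at hx
    rw [Real.exp_log (by norm_num : (0:ℝ) < 1/2)] at hx
    have hpos : 0 < exp ((1-α) * Real.log (1/2)) / ((1:ℝ)/2 + 1) *
        (1 - 1/(1-α) * ((1:ℝ)/2 / ((1:ℝ)/2 + 1))) := by
      apply mul_pos
      · positivity
      · have : (1:ℝ)/2 / ((1:ℝ)/2 + 1) = 1/3 := by norm_num
        rw [this]; linarith
    rw [hx] at hpos
    exact lt_irrefl 0 hpos
  · -- ODE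
    intro x
    have hg0x : (exp ((1 - α) * x / s) / (exp (x / s) + 1) *
        (1 - (1 / (1 - α)) * (exp (x / s) / (exp (x / s) + 1)))) = myg0 α (x/s) := by
      simp only [myg0, mul_div_assoc]
    have hderiv1x : deriv (fun x : ℝ => myg0 α (x/s)) x = myg1 α (x/s) * (1/s) :=
      (hF1 x).deriv
    have hderiv2x : deriv (deriv (fun x : ℝ => myg0 α (x/s))) x
        = myg2 α (x/s) * (1/s) * (1/s) := by
      rw [hderiv1]; exact (hF2 x).deriv
    rw [hFeq, hderiv2x, hderiv1x, hg0x]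
    have hode := my_ode α h1a' (x/s)
    have e1 : myg2 α (x/s) * (1/s) * (1/s) = (1/2) * myg2 α (x/s) := by
      rw [mul_assoc, div_mul_div_comm, one_mul, hss]
      ring
    have e2 : s * (1/2 - α) * (myg1 α (x/s) * (1/s)) = (1/2 - α) * myg1 α (x/s) := by
      field_simp
    rw [e1, e2, hlam]
    exact hode
  · rw [hFeq]
    have hcomp : Tendsto (fun x : ℝ => x / s) atBot atBot := by
      apply Tendsto.atBot_div_const hs0 tendsto_id
    exact (my_bot α h1a).comp hcomp
  · rw [hFeq]
    have hcomp : Tendsto (fun x : ℝ => x / s) atTop atTop :=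
      Tendsto.atTop_div_const hs0 tendsto_id
    exact (my_top α hαpos).comp hcomp
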